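/- If (M →^∂ N, ·, {−,−}) is a braided crossed module of Lie K-algebras, then the map ⦃−,−⦄ : (N ⊗ N) × (N ⊗ N) → N ⊗ M defined on generators by ⦃n ⊗ n', n'' ⊗ n'''⦄ = [n,n'] ⊗ {n'',n'''} is a braiding on the crossed module (N ⊗ M →^{Id_N ⊗ ∂} N ⊗ N, *), where (n ⊗ n')*(n'' ⊗ m) = [[n,n'],n''] ⊗ m + n'' ⊗ ([n,n']·m). -/

import Mathlib

universe u

/-- The Lie bracket as a bilinear map. -/
def bracketMap (K : Type u) [CommRing K] (M : Type u) [LieRing M] [LieAlgebra K M] :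
    M →ₗ[K] M →ₗ[K] M :=
  LinearMap.mk₂ K (fun a b => ⁅a, b⁆) add_lie smul_lie lie_add lie_smul

/-- Axioms for a crossed module of Lie `K`-algebras `(d : M → N, act)`. -/
structure LieXMod (K : Type u) [CommRing K] (M N : Type u)
    [LieRing M] [LieAlgebra K M] [LieRing N] [LieAlgebra K N]
    (d : M →ₗ⁅K⁆ N) (act : N →ₗ[K] M →ₗ[K] M) : Prop where
  act_lie : ∀ n n' m, act ⁅n, n'⁆ m = act n (act n' m) - act n' (act n m)
  lie_act : ∀ n m m', act n ⁅m, m'⁆ = ⁅act n m, m'⁆ + ⁅m, act n m'⁆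
  equivar : ∀ n m, d (act n m) = ⁅n, d m⁆
  peiffer : ∀ m m', act (d m) m' = ⁅m, m'⁆

/-- Axioms `BLie1`–`BLie6` for a braiding on a crossed module of Lie algebras. -/
structure LieBraiding (K : Type u) [CommRing K] (M N : Type u)
    [LieRing M] [LieAlgebra K M] [LieRing N] [LieAlgebra K N]
    (d : M →ₗ⁅K⁆ N) (act : N →ₗ[K] M →ₗ[K] M)
    (br : N →ₗ[K] N →ₗ[K] M) : Prop where
  b1 : ∀ n n', d (br n n') = ⁅n, n'⁆
  b2 : ∀ m m', br (d m) (d m') = ⁅m, m'⁆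
  b3 : ∀ m n, br (d m) n = - act n m
  b4 : ∀ n m, br n (d m) = act n m
  b5 : ∀ n n' n'', br n ⁅n', n''⁆ = br ⁅n, n'⁆ n'' - br ⁅n, n''⁆ n'
  b6 : ∀ n n' n'', br ⁅n, n'⁆ n'' = br n ⁅n', n''⁆ - br n' ⁅n, n''⁆

/-- `T`, together with the bilinear pairing `t`, is the non-abelian tensor product
of the Lie algebras `A` and `B` acting on each other via `actAB` and `actBA`:
it satisfies the defining relations of the presentation and the universal property. -/
structure IsNATensor (K : Type u) [CommRing K] (A B : Type u)
    [LieRing A] [LieAlgebra K A] [LieRing B] [LieAlgebra K B]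
    (actAB : A →ₗ[K] B →ₗ[K] B) (actBA : B →ₗ[K] A →ₗ[K] A)
    (T : Type u) [LieRing T] [LieAlgebra K T]
    (t : A →ₗ[K] B →ₗ[K] T) : Prop where
  rel3a : ∀ a a' b, t ⁅a, a'⁆ b = t a (actAB a' b) - t a' (actAB a b)
  rel3b : ∀ a b b', t a ⁅b, b'⁆ = t (actBA b' a) b - t (actBA b a) b'
  rel4 : ∀ a b a' b', ⁅t a b, t a' b'⁆ = - t (actBA b a) (actAB a' b')
  lift : ∀ (C : Type u) [LieRing C] [LieAlgebra K C] (f : A →ₗ[K] B →ₗ[K] C),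
      (∀ a a' b, f ⁅a, a'⁆ b = f a (actAB a' b) - f a' (actAB a b)) →
      (∀ a b b', f a ⁅b, b'⁆ = f (actBA b' a) b - f (actBA b a) b') →
      (∀ a b a' b', ⁅f a b, f a' b'⁆ = - f (actBA b a) (actAB a' b')) →
      ∃! φ : T →ₗ⁅K⁆ C, ∀ a b, φ (t a b) = f a b

/-- `T` with pairing `t` is the non-abelian tensor square of `N` (adjoint actions). -/
def IsNATensorSq (K : Type u) [CommRing K] (N : Type u) [LieRing N] [LieAlgebra K N]
    (T : Type u) [LieRing T] [LieAlgebra K T] (t : N →ₗ[K] N →ₗ[K] T) : Prop :=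
  IsNATensor K N N (bracketMap K N) (bracketMap K N) T t

/-- The action `m ⋆ n = ⁅∂ m, n⁆` of `M` on `N` induced by the boundary map. -/
def coAct (K : Type u) [CommRing K] (M N : Type u) [LieRing M] [LieAlgebra K M]
    [LieRing N] [LieAlgebra K N] (d : M →ₗ⁅K⁆ N) : M →ₗ[K] N →ₗ[K] N :=
  LinearMap.mk₂ K (fun m n => ⁅(d m : N), n⁆)
    (fun m m' n => by simp [add_lie]) (fun c m n => by simp [smul_lie])
    (fun m n n' => by simp [lie_add]) (fun c m n => by simp [lie_smul])

section Aux

variable {K : Type u} [CommRing K] {A B : Type u}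
  [LieRing A] [LieAlgebra K A] [LieRing B] [LieAlgebra K B]
  {actAB : A →ₗ[K] B →ₗ[K] B} {actBA : B →ₗ[K] A →ₗ[K] A}
  {T : Type u} [LieRing T] [LieAlgebra K T] {t : A →ₗ[K] B →ₗ[K] T}

lemma natensor_ext (hT : IsNATensor K A B actAB actBA T t)
    {C : Type u} [LieRing C] [LieAlgebra K C]
    (φ₁ φ₂ : T →ₗ⁅K⁆ C) (h : ∀ a b, φ₁ (t a b) = φ₂ (t a b)) : φ₁ = φ₂ := by
  have r1 : ∀ a a' b, (t.compr₂ φ₁.toLinearMap) ⁅a, a'⁆ b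
      = (t.compr₂ φ₁.toLinearMap) a (actAB a' b) - (t.compr₂ φ₁.toLinearMap) a' (actAB a b) := by
    intro a a' b; simp [hT.rel3a a a' b]
  have r2 : ∀ a b b', (t.compr₂ φ₁.toLinearMap) a ⁅b, b'⁆
      = (t.compr₂ φ₁.toLinearMap) (actBA b' a) b - (t.compr₂ φ₁.toLinearMap) (actBA b a) b' := by
    intro a b b'; simp [hT.rel3b a b b']
  have r3 : ∀ a b a' b', ⁅(t.compr₂ φ₁.toLinearMap) a b, (t.compr₂ φ₁.toLinearMap) a' b'⁆
      = - (t.compr₂ φ₁.toLinearMap) (actBA b a) (actAB a' b') := by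
    intro a b a' b'
    simp only [LinearMap.compr₂_apply, LieHom.coe_toLinearMap, ← LieHom.map_lie,
      hT.rel4 a b a' b']
    rw [map_neg]
  obtain ⟨ψ, hψ, hu⟩ := hT.lift C (t.compr₂ φ₁.toLinearMap) r1 r2 r3
  exact (hu φ₁ (fun a b => by simp)).trans
    (hu φ₂ (fun a b => by simp [← h])).symm

lemma natensor_span (hT : IsNATensor K A B actAB actBA T t) (x : T) :
    x ∈ Submodule.span K {z : T | ∃ a b, t a b = z} := by
  set s : Set T := {z : T | ∃ a b, t a b = z} with hs
  have hlie : ∀ x ∈ Submodule.span K s, ∀ y ∈ Submodule.span K s,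
      ⁅x, y⁆ ∈ Submodule.span K s := by
    intro x hx y hy
    refine Submodule.span_induction₂
      (p := fun x y _ _ => ⁅x, y⁆ ∈ Submodule.span K s) ?_ ?_ ?_ ?_ ?_ ?_ ?_ hx hy
    · rintro _ _ ⟨a, b, rfl⟩ ⟨a', b', rfl⟩
      rw [hT.rel4]
      exact neg_mem (Submodule.subset_span ⟨_, _, rfl⟩)
    · intro y hy; simp
    · intro x hx; simp
    · intro x y z _ _ _ h1 h2; rw [add_lie]; exact add_mem h1 h2
    · intro x y z _ _ _ h1 h2; rw [lie_add]; exact add_mem h1 h2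
    · intro c x y _ _ h1; rw [smul_lie]; exact Submodule.smul_mem _ _ h1
    · intro c x y _ _ h1; rw [lie_smul]; exact Submodule.smul_mem _ _ h1
  let L : LieSubalgebra K T :=
    { Submodule.span K s with
      lie_mem' := fun {x y} hx hy => hlie x hx y hy }
  have hmem : ∀ a b, t a b ∈ L := fun a b => Submodule.subset_span ⟨a, b, rfl⟩
  let f : A →ₗ[K] B →ₗ[K] L :=
    LinearMap.mk₂ K (fun a b => ⟨t a b, hmem a b⟩)
      (fun a a' b => Subtype.ext (by simp [map_add]))
      (fun c a b => Subtype.ext (show ((t (c • a)) b : T) = c • ((t a) b) by simp))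
      (fun a b b' => Subtype.ext (by simp [map_add]))
      (fun c a b => Subtype.ext (show ((t a) (c • b) : T) = c • ((t a) b) by simp))
  have r1 : ∀ a a' b, f ⁅a, a'⁆ b = f a (actAB a' b) - f a' (actAB a b) :=
    fun a a' b => Subtype.ext (by simpa [f] using hT.rel3a a a' b)
  have r2 : ∀ a b b', f a ⁅b, b'⁆ = f (actBA b' a) b - f (actBA b a) b' :=
    fun a b b' => Subtype.ext (by simpa [f] using hT.rel3b a b b')
  have r3 : ∀ a b a' b', ⁅f a b, f a' b'⁆ = - f (actBA b a) (actAB a' b') :=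
    fun a b a' b' => Subtype.ext (by simpa [f] using hT.rel4 a b a' b')
  obtain ⟨φ, hφ, -⟩ := hT.lift L f r1 r2 r3
  have hid : L.incl.comp φ = LieHom.id :=
    natensor_ext hT _ _ (fun a b => by simp [hφ, f])
  have hx := DFunLike.congr_fun hid x
  simp only [LieHom.comp_apply, LieHom.id_apply, LieSubalgebra.coe_incl] at hx
  rw [← hx]
  exact (φ x).2

lemma natensor_lin_ext (hT : IsNATensor K A B actAB actBA T t)
    {P : Type*} [AddCommGroup P] [Module K P] (g₁ g₂ : T →ₗ[K] P)
    (h : ∀ a b, g₁ (t a b) = g₂ (t a b)) : g₁ = g₂ := by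
  ext x
  refine Submodule.span_induction (p := fun x _ => g₁ x = g₂ x) ?_ ?_ ?_ ?_ (natensor_span hT x)
  · rintro _ ⟨a, b, rfl⟩; exact h a b
  · simp
  · intro x y _ _ hx hy; simp [hx, hy]
  · intro c x _ hx; simp [hx]

end Aux

theorem braiding_on_universal_extension (K : Type u) [CommRing K] (M N : Type u) [LieRing M] [LieAlgebra K M]
    [LieRing N] [LieAlgebra K N] (d : M →ₗ⁅K⁆ N) (act : N →ₗ[K] M →ₗ[K] M)
    (br : N →ₗ[K] N →ₗ[K] M) (hX : LieXMod K M N d act)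
    (hB : LieBraiding K M N d act br)
    (TM : Type u) [LieRing TM] [LieAlgebra K TM] (tm : N →ₗ[K] M →ₗ[K] TM)
    (hTM : IsNATensor K N M act (coAct K M N d) TM tm)
    (TN : Type u) [LieRing TN] [LieAlgebra K TN] (tn : N →ₗ[K] N →ₗ[K] TN)
    (hTN : IsNATensorSq K N TN tn)
    (D : TM →ₗ⁅K⁆ TN) (hD : ∀ (n : N) (m : M), D (tm n m) = tn n (d m))
    (A : TN →ₗ[K] TM →ₗ[K] TM)
    (hA : ∀ (n₁ n₂ n₃ : N) (m : M),
      A (tn n₁ n₂) (tm n₃ m) = tm ⁅⁅n₁, n₂⁆, n₃⁆ m + tm n₃ (act ⁅n₁, n₂⁆ m)) :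
    ∃ Br : TN →ₗ[K] TN →ₗ[K] TM,
      (∀ n₁ n₂ n₃ n₄ : N,
        Br (tn n₁ n₂) (tn n₃ n₄) = tm ⁅n₁, n₂⁆ (br n₃ n₄)) ∧
      LieBraiding K TM TN D A Br := by
  classical
  have hTN' : IsNATensor K N N (bracketMap K N) (bracketMap K N) TN tn := hTN
  -- the commutator morphism κ : TN → N
  have rκ1 : ∀ a a' b : N, (bracketMap K N) ⁅a, a'⁆ b
      = (bracketMap K N) a ((bracketMap K N) a' b) - (bracketMap K N) a' ((bracketMap K N) a b) := by
    intro a a' b; simp only [bracketMap, LinearMap.mk₂_apply]; exact lie_lie a a' b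
  have rκ2 : ∀ a b b' : N, (bracketMap K N) a ⁅b, b'⁆
      = (bracketMap K N) ((bracketMap K N) b' a) b - (bracketMap K N) ((bracketMap K N) b a) b' := by
    intro a b b'
    simp only [bracketMap, LinearMap.mk₂_apply]
    rw [← lie_skew b' a, ← lie_skew b a, neg_lie, neg_lie, leibniz_lie a b b',
      ← lie_skew b ⁅a, b'⁆]
    abel
  have rκ3 : ∀ a b a' b' : N, ⁅(bracketMap K N) a b, (bracketMap K N) a' b'⁆
      = - (bracketMap K N) ((bracketMap K N) b a) ((bracketMap K N) a' b') := by
    intro a b a' b'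
    simp only [bracketMap, LinearMap.mk₂_apply]
    rw [← lie_skew b a, neg_lie, neg_neg]
  obtain ⟨κ, hκ, -⟩ := hTN'.lift N (bracketMap K N) rκ1 rκ2 rκ3
  have hκ' : ∀ a b : N, κ (tn a b) = ⁅a, b⁆ := by
    intro a b; rw [hκ]; simp [bracketMap]
  -- the braiding morphism β : TN → M
  have rβ1 : ∀ a a' b : N, br ⁅a, a'⁆ b
      = br a ((bracketMap K N) a' b) - br a' ((bracketMap K N) a b) := by
    intro a a' b; simp only [bracketMap, LinearMap.mk₂_apply]; exact hB.b6 a a' b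
  have rβ2 : ∀ a b b' : N, br a ⁅b, b'⁆
      = br ((bracketMap K N) b' a) b - br ((bracketMap K N) b a) b' := by
    intro a b b'
    simp only [bracketMap, LinearMap.mk₂_apply]
    rw [hB.b5 a b b', ← lie_skew b' a, ← lie_skew b a]
    simp only [map_neg, LinearMap.neg_apply]
    abel
  have rβ3 : ∀ a b a' b' : N, ⁅br a b, br a' b'⁆
      = - br ((bracketMap K N) b a) ((bracketMap K N) a' b') := by
    intro a b a' b'
    simp only [bracketMap, LinearMap.mk₂_apply]
    rw [← hX.peiffer, hB.b1, ← hB.b4, hB.b1, ← lie_skew b a]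
    simp only [map_neg, LinearMap.neg_apply, neg_neg]
  obtain ⟨β, hβ, -⟩ := hTN'.lift M br rβ1 rβ2 rβ3
  -- d ∘ β = κ
  have hdβ : ∀ x : TN, d (β x) = κ x := by
    have : d.comp β = κ := by
      refine natensor_ext hTN' _ _ (fun a b => ?_)
      rw [LieHom.comp_apply, hβ, hκ', hB.b1]
    intro x; rw [← this, LieHom.comp_apply]
  -- the braiding on the tensor level
  refine ⟨(tm.comp κ.toLinearMap).compl₂ β.toLinearMap, ?_, ?_⟩
  case _ => intro n₁ n₂ n₃ n₄; simp [LinearMap.compl₂_apply, hκ', hβ]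
  set Br : TN →ₗ[K] TN →ₗ[K] TM := (tm.comp κ.toLinearMap).compl₂ β.toLinearMap with hBrdef
  have hBr : ∀ x y : TN, Br x y = tm (κ x) (β y) := fun x y => rfl
  have hgen : ∀ a b c e : N, Br (tn a b) (tn c e) = tm ⁅a, b⁆ (br c e) := by
    intro a b c e; rw [hBr, hκ', hβ]
  -- the key identity
  have key : ∀ (n : N) (m p : M), tm n ⁅m, p⁆ = tm (d m) (act n p) - tm (d p) (act n m) := by
    intro n m p
    have h1 := hTM.rel3b n m p
    simp only [coAct, LinearMap.mk₂_apply] at h1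
    have h2 := hTM.rel3a (d p) n m
    have h3 := hTM.rel3a (d m) n p
    rw [hX.peiffer] at h2 h3
    rw [h2, h3] at h1
    have h4 : tm n ⁅p, m⁆ = - tm n ⁅m, p⁆ := by
      rw [← lie_skew m p, map_neg, neg_neg]
    rw [h4] at h1
    have h7 := eq_sub_iff_add_eq.mp h1
    have h8 : tm n ⁅m, p⁆ + (tm (d m) (act n p) - tm n ⁅m, p⁆) = tm (d m) (act n p) := by abel
    rw [h8, sub_neg_eq_add] at h7
    rw [eq_sub_iff_add_eq, add_comm]
    exact h7.symm
  -- skew-symmetry helper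
  have eskew : ∀ (u v : N) (w : M), tm ⁅u, v⁆ w = - tm ⁅v, u⁆ w := by
    intro u v w
    rw [← lie_skew v u, map_neg]
    simp only [LinearMap.neg_apply, neg_neg]
  -- BLie1
  have e1 : Br.compr₂ D.toLinearMap = bracketMap K TN := by
    refine natensor_lin_ext hTN' _ _ (fun a b => natensor_lin_ext hTN' _ _ (fun c e => ?_))
    simp only [LinearMap.compr₂_apply, LieHom.coe_toLinearMap, bracketMap, LinearMap.mk₂_apply]
    rw [hgen, hD, hB.b1, hTN'.rel4]
    simp only [bracketMap, LinearMap.mk₂_apply]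
    rw [← lie_skew a b, map_neg]
    simp only [LinearMap.neg_apply, neg_neg]
  -- BLie2
  have e2 : (Br.comp D.toLinearMap).compl₂ D.toLinearMap = bracketMap K TM := by
    refine natensor_lin_ext hTM _ _ (fun n m => natensor_lin_ext hTM _ _ (fun n' m' => ?_))
    simp only [LinearMap.compl₂_apply, LinearMap.comp_apply, LieHom.coe_toLinearMap,
      bracketMap, LinearMap.mk₂_apply]
    rw [hD, hD, hgen, hB.b4, hTM.rel4]
    simp only [coAct, LinearMap.mk₂_apply]
    rw [← lie_skew n (d m), map_neg]
    simp only [LinearMap.neg_apply, neg_neg]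
  -- BLie3
  have e3 : Br.comp D.toLinearMap = - A.flip := by
    refine natensor_lin_ext hTM _ _ (fun n m => natensor_lin_ext hTN' _ _ (fun a b => ?_))
    simp only [LinearMap.comp_apply, LieHom.coe_toLinearMap, LinearMap.neg_apply,
      LinearMap.flip_apply]
    rw [hD, hgen, hA]
    have h1 := hTM.rel3a n (d m) (br a b)
    rw [hX.peiffer] at h1
    rw [h1, key n m (br a b), hB.b1]
    have h2 := hTM.rel3a ⁅a, b⁆ n m
    rw [h2]
    abel
  -- BLie4
  have e4 : Br.compl₂ D.toLinearMap = A := by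
    refine natensor_lin_ext hTN' _ _ (fun a b => natensor_lin_ext hTM _ _ (fun n m => ?_))
    simp only [LinearMap.compl₂_apply, LieHom.coe_toLinearMap]
    rw [hD, hgen, hB.b4, hA]
    have h2 := hTM.rel3a ⁅a, b⁆ n m
    rw [h2]
    abel
  constructor
  · intro x y
    have h := LinearMap.congr_fun (LinearMap.congr_fun e1 x) y
    simpa [bracketMap] using h
  · intro x y
    have h := LinearMap.congr_fun (LinearMap.congr_fun e2 x) y
    simpa [bracketMap] using h
  · intro x y
    have h := LinearMap.congr_fun (LinearMap.congr_fun e3 x) y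
    simpa using h
  · intro x y
    have h := LinearMap.congr_fun (LinearMap.congr_fun e4 x) y
    simpa using h
  · -- BLie5
    intro x y z
    rw [hBr, hBr, hBr, LieHom.map_lie, LieHom.map_lie, LieHom.map_lie]
    have h1 := hTM.rel3b (κ x) (β y) (β z)
    simp only [coAct, LinearMap.mk₂_apply] at h1
    rw [hdβ, hdβ] at h1
    rw [h1, eskew (κ x) (κ y) (β z), eskew (κ x) (κ z) (β y)]
    abel
  · -- BLie6
    intro x y z
    rw [hBr, hBr, hBr, LieHom.map_lie, LieHom.map_lie, LieHom.map_lie]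
    have hp : ∀ (w : TN) (v : M), act (κ w) v = ⁅β w, v⁆ := by
      intro w v; rw [← hdβ w, hX.peiffer]
    have h1 := hTM.rel3a (κ x) (κ y) (β z)
    rw [hp, hp] at h1
    exact h1
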